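/- arXiv:2007.05451 — 2 statements merged into one kernel-verified Lean document; each statement's English description precedes it below -/
import Mathlib

section
/- Let R₂ = (ℤ/2)[t, w] be the polynomial ring over the field with two elements in two variables, and let I₂ ⊆ R₂ be the ideal generated by t^9 + w^2·t and w^3 + w^2·t^4 + w·t^8. Then t^16 ∈ I₂. -/
open MvPolynomial

/-- `t`, the degree-2 generator of the mod 2 cohomology ring of EIII. -/
noncomputable def t : MvPolynomial (Fin 2) (ZMod 2) := X 0

/-- `w`, the degree-8 generator of the mod 2 cohomology ring of EIII. -/
noncomputable def w : MvPolynomial (Fin 2) (ZMod 2) := X 1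

/-- The ideal of relations in the mod 2 cohomology ring of EIII. -/
noncomputable def I₂ : Ideal (MvPolynomial (Fin 2) (ZMod 2)) :=
  Ideal.span {t ^ 9 + w ^ 2 * t, w ^ 3 + w ^ 2 * t ^ 4 + w * t ^ 8}

theorem stmt_7 : t ^ 16 ∈ I₂ := by
  have h : t ^ 16 = (t ^ 7 + w * t ^ 3) * (t ^ 9 + w ^ 2 * t)
      + t ^ 4 * (w ^ 3 + w ^ 2 * t ^ 4 + w * t ^ 8) := by
    have h2 : (2 : MvPolynomial (Fin 2) (ZMod 2)) = 0 := CharTwo.two_eq_zero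
    linear_combination (-(t ^ 8 * w ^ 2 + t ^ 12 * w + t ^ 4 * w ^ 3)) * h2
  rw [h]
  exact add_mem
    (Ideal.mul_mem_left _ _ (Ideal.subset_span (Set.mem_insert _ _)))
    (Ideal.mul_mem_left _ _ (Ideal.subset_span (Set.mem_insert_of_mem _ rfl)))
end

section
/- Let R₂ = (ℤ/2)[t, w] be the polynomial ring over the field with two elements in two variables, and let I₂ ⊆ R₂ be the ideal generated by t^9 + w^2·t and w^3 + w^2·t^4 + w·t^8. Then t^12·w ∉ I₂, i.e. the image of t^12·w in R₂/I₂ is nonzero. -/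
open MvPolynomial

private noncomputable abbrev s1 : Fin 2 →₀ ℕ := Finsupp.single 0 9
private noncomputable abbrev s2 : Fin 2 →₀ ℕ := Finsupp.single 1 2 + Finsupp.single 0 1
private noncomputable abbrev s3 : Fin 2 →₀ ℕ := Finsupp.single 1 3
private noncomputable abbrev s4 : Fin 2 →₀ ℕ := Finsupp.single 1 2 + Finsupp.single 0 4
private noncomputable abbrev s5 : Fin 2 →₀ ℕ := Finsupp.single 1 1 + Finsupp.single 0 8
private noncomputable abbrev m1 : Fin 2 →₀ ℕ := Finsupp.single 0 12 + Finsupp.single 1 1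
private noncomputable abbrev m2 : Fin 2 →₀ ℕ := Finsupp.single 0 4 + Finsupp.single 1 3
private noncomputable abbrev m3 : Fin 2 →₀ ℕ := Finsupp.single 1 4
private noncomputable abbrev u : Fin 2 →₀ ℕ := Finsupp.single 0 3 + Finsupp.single 1 1
private noncomputable abbrev v : Fin 2 →₀ ℕ := Finsupp.single 0 4
private noncomputable abbrev xx : Fin 2 →₀ ℕ := Finsupp.single 1 1

theorem stmt_11 : t ^ 12 * w ∉ I₂ := by
  intro hmem
  rw [I₂, Ideal.mem_span_pair] at hmem
  obtain ⟨a, b, h⟩ := hmem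
  have eG1 : t ^ 9 + w ^ 2 * t = monomial s1 1 + monomial s2 1 := by
    simp [t, w, X_pow_eq_monomial, X, monomial_mul, monomial_pow, Finsupp.smul_single]
  have eG2 : w ^ 3 + w ^ 2 * t ^ 4 + w * t ^ 8
      = monomial s3 1 + monomial s4 1 + monomial s5 1 := by
    simp [t, w, X_pow_eq_monomial, X, monomial_mul, monomial_pow, Finsupp.smul_single]
  have eM : t ^ 12 * w = monomial m1 1 := by
    simp [t, w, X_pow_eq_monomial, X, monomial_mul, monomial_pow, Finsupp.smul_single]
  rw [eG1, eG2, eM] at h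
  -- ≤ facts
  have p11 : s1 ≤ m1 := by rw [Finsupp.le_def]; intro i; fin_cases i <;> simp
  have p51 : s5 ≤ m1 := by rw [Finsupp.le_def]; intro i; fin_cases i <;> simp
  have p22 : s2 ≤ m2 := by rw [Finsupp.le_def]; intro i; fin_cases i <;> simp
  have p32 : s3 ≤ m2 := by rw [Finsupp.le_def]; intro i; fin_cases i <;> simp
  have p42 : s4 ≤ m2 := by rw [Finsupp.le_def]; intro i; fin_cases i <;> simp
  have p33 : s3 ≤ m3 := by rw [Finsupp.le_def]; intro i; fin_cases i <;> simp
  have n21 : ¬ s2 ≤ m1 := by rw [Finsupp.le_def]; push_neg; exact ⟨1, by simp⟩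
  have n31 : ¬ s3 ≤ m1 := by rw [Finsupp.le_def]; push_neg; exact ⟨1, by simp⟩
  have n41 : ¬ s4 ≤ m1 := by rw [Finsupp.le_def]; push_neg; exact ⟨1, by simp⟩
  have n12 : ¬ s1 ≤ m2 := by rw [Finsupp.le_def]; push_neg; exact ⟨0, by simp⟩
  have n52 : ¬ s5 ≤ m2 := by rw [Finsupp.le_def]; push_neg; exact ⟨0, by simp⟩
  have n13 : ¬ s1 ≤ m3 := by rw [Finsupp.le_def]; push_neg; exact ⟨0, by simp⟩
  have n23 : ¬ s2 ≤ m3 := by rw [Finsupp.le_def]; push_neg; exact ⟨0, by simp⟩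
  have n43 : ¬ s4 ≤ m3 := by rw [Finsupp.le_def]; push_neg; exact ⟨0, by simp⟩
  have n53 : ¬ s5 ≤ m3 := by rw [Finsupp.le_def]; push_neg; exact ⟨0, by simp⟩
  -- subtraction facts
  have d11 : m1 - s1 = u := by ext i; fin_cases i <;> simp [Finsupp.tsub_apply]
  have d51 : m1 - s5 = v := by ext i; fin_cases i <;> simp [Finsupp.tsub_apply]
  have d22 : m2 - s2 = u := by ext i; fin_cases i <;> simp [Finsupp.tsub_apply]
  have d32 : m2 - s3 = v := by ext i; fin_cases i <;> simp [Finsupp.tsub_apply]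
  have d42 : m2 - s4 = xx := by ext i; fin_cases i <;> simp [Finsupp.tsub_apply]
  have d33 : m3 - s3 = xx := by ext i; fin_cases i <;> simp [Finsupp.tsub_apply]
  -- distinctness for RHS coefficients
  have q2 : m1 ≠ m2 := by
    intro hq; have := DFunLike.congr_fun hq 0; simp at this
  have q3 : m1 ≠ m3 := by
    intro hq; have := DFunLike.congr_fun hq 0; simp at this
  have h1 := congrArg (coeff m1) h
  have h2 := congrArg (coeff m2) h
  have h3 := congrArg (coeff m3) h
  simp only [coeff_add, mul_add, coeff_mul_monomial', coeff_monomial,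
    p11, p51, p22, p32, p42, p33, n21, n31, n41, n12, n52, n13, n23, n43, n53,
    d11, d51, d22, d32, d42, d33, if_true, if_false, ite_true, ite_false,
    mul_one, add_zero, zero_add] at h1 h2 h3
  rw [if_neg q2] at h2
  rw [if_neg q3] at h3
  rw [h3, add_zero] at h2
  rw [h2] at h1
  exact zero_ne_one h1
end
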